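/- The function f(x₁,x₂) = (1/2)·(1-Φ(max(|x₁|,|x₂|))) is a probability density on ℝ², i.e., it is nonnegative and integrates to 1. -/

import Mathlib

open Real MeasureTheory

/-- The standard normal CDF. -/
noncomputable def stdNormalCDF (t : ℝ) : ℝ :=
  ∫ s in Set.Iic t, (Real.sqrt (2 * Real.pi))⁻¹ * Real.exp (-s ^ 2 / 2)

open Set Filter Topology

noncomputable def g (s : ℝ) : ℝ := (Real.sqrt (2 * Real.pi))⁻¹ * Real.exp (-s ^ 2 / 2)

lemma exp_eq : (fun s : ℝ => Real.exp (-s ^ 2 / 2)) = fun s : ℝ => Real.exp (-(1/2) * s ^ 2) := by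
  funext s; ring_nf

lemma g_nonneg (s : ℝ) : 0 ≤ g s :=
  mul_nonneg (inv_nonneg.2 (Real.sqrt_nonneg _)) (Real.exp_nonneg _)

lemma g_cont : Continuous g := by unfold g; fun_prop

lemma integrable_g : Integrable g := by
  unfold g
  exact (by rw [exp_eq]; exact integrable_exp_neg_mul_sq (by norm_num) :
    Integrable fun s : ℝ => Real.exp (-s ^ 2 / 2)).const_mul _

lemma sqrt_two_pi_pos : 0 < Real.sqrt (2 * Real.pi) :=
  Real.sqrt_pos.2 (by positivity)

lemma gauss_total : ∫ s : ℝ, g s = 1 := by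
  unfold g
  rw [MeasureTheory.integral_const_mul, exp_eq]
  rw [integral_gaussian]
  rw [show Real.pi / (1/2) = 2 * Real.pi by ring]
  exact inv_mul_cancel₀ sqrt_two_pi_pos.ne'

lemma tail (t : ℝ) : 1 - stdNormalCDF t = ∫ s in Set.Ioi t, g s := by
  have h := intervalIntegral.integral_Iic_add_Ioi (b := t) (μ := volume)
    integrable_g.integrableOn integrable_g.integrableOn
  rw [gauss_total] at h
  have : stdNormalCDF t = ∫ s in Set.Iic t, g s := rfl
  rw [this]; linarith

lemma tail_nonneg (t : ℝ) : 0 ≤ 1 - stdNormalCDF t := by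
  rw [tail]
  exact setIntegral_nonneg measurableSet_Ioi fun s _ => g_nonneg s

lemma cdf_mono : Monotone stdNormalCDF := by
  intro a b hab
  exact setIntegral_mono_set integrable_g.integrableOn
    (Eventually.of_forall fun s => g_nonneg s)
    (HasSubset.Subset.eventuallyLE (Iic_subset_Iic.2 hab))

lemma hasDeriv_aux (s : ℝ) :
    HasDerivAt (fun s : ℝ => -s * Real.exp (-s ^ 2 / 2))
      ((s ^ 2 - 1) * Real.exp (-s ^ 2 / 2)) s := by
  have h1 : HasDerivAt (fun s : ℝ => -s ^ 2 / 2) (-s) s := by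
    have := ((hasDerivAt_pow 2 s).neg.div_const 2)
    exact this.congr_deriv (by rw [show (2:ℕ) - 1 = 1 from rfl]; push_cast; ring)
  have h2 := h1.exp
  have h3 := ((hasDerivAt_id s).neg.mul h2)
  exact h3.congr_deriv (by show -1 * _ + -s * _ = _; ring)

lemma tendsto_aux :
    Tendsto (fun s : ℝ => -s * Real.exp (-s ^ 2 / 2)) atTop (𝓝 0) := by
  have h := rpow_mul_exp_neg_mul_sq_isLittleO_exp_neg (b := 1/2) (by norm_num) 1
  have hhalf : Tendsto (fun x : ℝ => Real.exp (-(1/2) * x)) atTop (𝓝 0) := by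
    have h1 : Tendsto (fun x : ℝ => (1/2) * x) atTop atTop :=
      Tendsto.const_mul_atTop (by norm_num) tendsto_id
    refine (tendsto_exp_neg_atTop_nhds_zero.comp h1).congr fun x => ?_
    simp [Function.comp, neg_mul]
  have h2 : Tendsto (fun x : ℝ => x ^ (1:ℝ) * Real.exp (-(1/2) * x ^ 2)) atTop (𝓝 0) :=
    h.isBigO.trans_tendsto hhalf
  have h3 : Tendsto (fun s : ℝ => s * Real.exp (-s ^ 2 / 2)) atTop (𝓝 0) := by
    refine h2.congr' ?_
    filter_upwards [eventually_ge_atTop (0:ℝ)] with x hx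
    rw [Real.rpow_one]
    ring_nf
  simpa using h3.neg

lemma integrableOn_sq_exp : IntegrableOn (fun s : ℝ => s ^ 2 * Real.exp (-s ^ 2 / 2)) (Ioi 0) := by
  have h := integrableOn_rpow_mul_exp_neg_mul_sq (b := 1/2) (by norm_num) (s := 2) (by norm_num)
  refine h.congr_fun (fun x hx => ?_) measurableSet_Ioi
  dsimp only
  rw [show ((2:ℝ)) = ((2:ℕ):ℝ) by norm_num, Real.rpow_natCast]
  ring_nf

lemma integrableOn_exp_Ioi : IntegrableOn (fun s : ℝ => Real.exp (-s ^ 2 / 2)) (Ioi 0) := by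
  rw [exp_eq]
  exact (integrable_exp_neg_mul_sq (by norm_num)).integrableOn

lemma I0_val : ∫ s in Ioi (0:ℝ), Real.exp (-s ^ 2 / 2) = Real.sqrt (2 * Real.pi) / 2 := by
  have h : ∫ x : ℝ, Real.exp (-|x| ^ 2 / 2) = 2 * ∫ s in Ioi (0:ℝ), Real.exp (-s ^ 2 / 2) :=
    integral_comp_abs (f := fun s => Real.exp (-s ^ 2 / 2))
  simp_rw [sq_abs] at h
  rw [exp_eq] at h
  rw [integral_gaussian, show Real.pi / (1/2) = 2 * Real.pi by ring] at h
  rw [exp_eq]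
  linarith

lemma I2_val : ∫ s in Ioi (0:ℝ), s ^ 2 * Real.exp (-s ^ 2 / 2) = Real.sqrt (2 * Real.pi) / 2 := by
  have hibp := integral_Ioi_of_hasDerivAt_of_tendsto' (f' := fun s => (s ^ 2 - 1) * Real.exp (-s ^ 2 / 2))
    (fun s _ => hasDeriv_aux s)
    (MeasureTheory.IntegrableOn.congr_fun (integrableOn_sq_exp.sub integrableOn_exp_Ioi)
      (fun x _ => by simp [Pi.sub_apply]; ring) measurableSet_Ioi) tendsto_aux
  simp only [neg_zero, zero_mul, sub_zero, zero_sub, neg_neg] at hibp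
  have hsplit : ∫ s in Ioi (0:ℝ), (s ^ 2 - 1) * Real.exp (-s ^ 2 / 2)
      = (∫ s in Ioi (0:ℝ), s ^ 2 * Real.exp (-s ^ 2 / 2)) - ∫ s in Ioi (0:ℝ), Real.exp (-s ^ 2 / 2) := by
    rw [← integral_sub integrableOn_sq_exp integrableOn_exp_Ioi]
    congr 1; funext s; ring
  rw [hsplit] at hibp
  have h0 := I0_val
  have : (0:ℝ) * Real.exp (-(0:ℝ) ^ 2 / 2) = 0 := by simp
  rw [I0_val] at hibp
  have hz : (0:ℝ) - -0 * Real.exp (-(0:ℝ) ^ 2 / 2) = 0 := by norm_num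
  linarith

lemma key_val : ∫ s in Ioi (0:ℝ), 4 * s ^ 2 * g s = 2 := by
  unfold g
  have : ∀ s : ℝ, 4 * s ^ 2 * ((Real.sqrt (2 * Real.pi))⁻¹ * Real.exp (-s ^ 2 / 2))
      = (4 * (Real.sqrt (2 * Real.pi))⁻¹) * (s ^ 2 * Real.exp (-s ^ 2 / 2)) := fun s => by ring
  simp_rw [this]
  rw [MeasureTheory.integral_const_mul, I2_val]
  field_simp
  norm_num

lemma integrableOn_key : IntegrableOn (fun s : ℝ => 4 * s ^ 2 * g s) (Ioi 0) := by
  unfold g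
  exact MeasureTheory.IntegrableOn.congr_fun
    (integrableOn_sq_exp.const_mul (4 * (Real.sqrt (2 * Real.pi))⁻¹))
    (fun x _ => by ring) measurableSet_Ioi

theorem square_contour_is_density :
    (∀ x : ℝ × ℝ, 0 ≤ (1 / 2) * (1 - stdNormalCDF (max |x.1| |x.2|))) ∧
    (∫ x : ℝ × ℝ, (1 / 2) * (1 - stdNormalCDF (max |x.1| |x.2|))) = 1 := by
  have hnn : ∀ x : ℝ × ℝ, 0 ≤ (1 / 2) * (1 - stdNormalCDF (max |x.1| |x.2|)) := fun x => by
    have := tail_nonneg (max |x.1| |x.2|); linarith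
  refine ⟨hnn, ?_⟩
  set m : ℝ × ℝ → ℝ := fun x => max |x.1| |x.2| with hm
  have hmmeas : Measurable m := measurable_fst.abs.max measurable_snd.abs
  have hmeas_h : Measurable fun x : ℝ × ℝ => (1/2) * (1 - stdNormalCDF (m x)) :=
    (measurable_const.sub (cdf_mono.measurable.comp hmmeas)).const_mul _
  rw [integral_eq_lintegral_of_nonneg_ae (Eventually.of_forall hnn)
    hmeas_h.aestronglyMeasurable]
  have hG : Measurable fun s : ℝ => ENNReal.ofReal (g s) := g_cont.measurable.ennreal_ofReal
  have key : ∀ t : ℝ, ENNReal.ofReal ((1/2) * (1 - stdNormalCDF t))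
      = ENNReal.ofReal (1/2) * ∫⁻ s in Ioi t, ENNReal.ofReal (g s) := by
    intro t
    rw [ENNReal.ofReal_mul (by norm_num), tail,
      MeasureTheory.ofReal_integral_eq_lintegral_ofReal integrable_g.integrableOn
        (Eventually.of_forall fun s => g_nonneg s)]
  have main : (∫⁻ x : ℝ × ℝ, ENNReal.ofReal ((1/2) * (1 - stdNormalCDF (m x)))) = 1 := by
    simp_rw [key]
    rw [lintegral_const_mul' _ _ ENNReal.ofReal_ne_top]
    have hind : ∀ x : ℝ × ℝ, (∫⁻ s in Ioi (m x), ENNReal.ofReal (g s))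
        = ∫⁻ s, (Ioi (m x)).indicator (fun s => ENNReal.ofReal (g s)) s := fun x =>
      (lintegral_indicator measurableSet_Ioi _).symm
    simp_rw [hind]
    have hFmeas : Measurable (Function.uncurry fun (x : ℝ × ℝ) (s : ℝ) =>
        (Ioi (m x)).indicator (fun s => ENNReal.ofReal (g s)) s) := by
      have e : (Function.uncurry fun (x : ℝ × ℝ) (s : ℝ) =>
          (Ioi (m x)).indicator (fun s => ENNReal.ofReal (g s)) s)
          = {q : (ℝ × ℝ) × ℝ | m q.1 < q.2}.indicator
              (fun q => ENNReal.ofReal (g q.2)) := by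
        funext p
        by_cases h : m p.1 < p.2 <;>
          simp [Function.uncurry, Set.indicator, Set.mem_Ioi, h]
      rw [e]
      exact (hG.comp measurable_snd).indicator
        (measurableSet_lt (hmmeas.comp measurable_fst) measurable_snd)
    rw [lintegral_lintegral_swap hFmeas.aemeasurable]
    have inner : ∀ s : ℝ, (∫⁻ x : ℝ × ℝ, (Ioi (m x)).indicator
        (fun s => ENNReal.ofReal (g s)) s)
        = ENNReal.ofReal (g s) * (ENNReal.ofReal (2*s) * ENNReal.ofReal (2*s)) := by
      intro s
      have e1 : (fun x : ℝ × ℝ => (Ioi (m x)).indicator (fun s => ENNReal.ofReal (g s)) s)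
          = {x : ℝ × ℝ | m x < s}.indicator (fun _ => ENNReal.ofReal (g s)) := by
        funext x
        by_cases h : m x < s <;> simp [Set.indicator, Set.mem_Ioi, h]
      rw [e1, lintegral_indicator_const (measurableSet_lt hmmeas measurable_const)]
      congr 1
      have e2 : {x : ℝ × ℝ | m x < s} = (Ioo (-s) s) ×ˢ (Ioo (-s) s) := by
        ext x
        simp only [hm, Set.mem_setOf_eq, max_lt_iff, abs_lt, Set.mem_prod, Set.mem_Ioo]
      rw [e2, Measure.volume_eq_prod, Measure.prod_prod, Real.volume_Ioo,
        show s - -s = 2*s by ring]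
    simp_rw [inner]
    rw [← lintegral_add_compl (fun s : ℝ => ENNReal.ofReal (g s) *
      (ENNReal.ofReal (2*s) * ENNReal.ofReal (2*s))) (A := Ioi 0) measurableSet_Ioi]
    have hIic : (∫⁻ s in (Ioi (0:ℝ))ᶜ, ENNReal.ofReal (g s) *
        (ENNReal.ofReal (2*s) * ENNReal.ofReal (2*s))) = 0 := by
      rw [compl_Ioi]
      have h0 : ∀ᵐ s ∂(volume : Measure ℝ), s ∈ Iic (0:ℝ) →
          ENNReal.ofReal (g s) * (ENNReal.ofReal (2*s) * ENNReal.ofReal (2*s)) = 0 := by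
        refine Eventually.of_forall fun s hs => ?_
        rw [ENNReal.ofReal_of_nonpos (by linarith [mem_Iic.mp hs] : 2*s ≤ 0)]
        simp
      exact (setLIntegral_congr_fun_ae measurableSet_Iic h0).trans lintegral_zero
    have hIoi : (∫⁻ s in Ioi (0:ℝ), ENNReal.ofReal (g s) *
        (ENNReal.ofReal (2*s) * ENNReal.ofReal (2*s))) = ENNReal.ofReal 2 := by
      have he : ∀ᵐ s ∂(volume : Measure ℝ), s ∈ Ioi (0:ℝ) →
          ENNReal.ofReal (g s) * (ENNReal.ofReal (2*s) * ENNReal.ofReal (2*s))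
            = ENNReal.ofReal (4 * s^2 * g s) := by
        refine Eventually.of_forall fun s hs => ?_
        have hs' : (0:ℝ) < s := hs
        rw [← ENNReal.ofReal_mul (by linarith : (0:ℝ) ≤ 2*s),
          ← ENNReal.ofReal_mul (g_nonneg s)]
        congr 1; ring
      rw [setLIntegral_congr_fun_ae measurableSet_Ioi he,
        ← MeasureTheory.ofReal_integral_eq_lintegral_ofReal integrableOn_key
          (Eventually.of_forall fun s => mul_nonneg (by positivity) (g_nonneg s)),
        key_val]
    rw [hIic, hIoi, add_zero, ← ENNReal.ofReal_mul (by norm_num)]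
    norm_num
  rw [main, ENNReal.toReal_one]
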